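/- If σ = θ·ς₁·ω^d(ς₂) with ς₁ς₂ = ς₂ς₁ = τ and a = τ^k·ω^d(τ^ℓ) with k + ℓ ≡ -1 (mod q) where q is the order of τ, then σa is an involution: (σa)² = 1. Moreover the permutations η_s = ω^{(s-1)d}(σa), s = 1,...,n-1, are involutions satisfying the Coxeter/braid relations, so the map (s,s+1) ↦ η_s extends to a homomorphism from S_n to S_{nd}. -/

import Mathlib

/-- The shift of a permutation of `ℕ` up by `d`: fixes `{0,…,d-1}` and acts as `σ`
conjugated by `k ↦ k + d` above. -/
def shift (d : ℕ) (σ : Equiv.Perm ℕ) : Equiv.Perm ℕ where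
  toFun k := if k < d then k else σ (k - d) + d
  invFun k := if k < d then k else σ⁻¹ (k - d) + d
  left_inv k := by
    by_cases h : k < d
    · simp [h]
    · dsimp only
      rw [if_neg h, if_neg (by omega), Nat.add_sub_cancel, Equiv.Perm.inv_def, Equiv.symm_apply_apply]
      omega
  right_inv k := by
    by_cases h : k < d
    · simp [h]
    · dsimp only
      rw [if_neg h, if_neg (by omega), Nat.add_sub_cancel, Equiv.Perm.inv_def, Equiv.apply_symm_apply]
      omega

/-- The involution of `ℕ` swapping the blocks `{0,…,d-1}` and `{d,…,2d-1}`. -/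
def theta (d : ℕ) : Equiv.Perm ℕ :=
  Function.Involutive.toPerm
    (fun k => if k < d then k + d else if k < 2 * d then k - d else k)
    (by intro k; dsimp only; split_ifs <;> omega)

namespace Stmt17

open Equiv

def fixGE (d : ℕ) : Subgroup (Equiv.Perm ℕ) where
  carrier := {π | ∀ x, d ≤ x → π x = x}
  one_mem' := fun _ _ => rfl
  mul_mem' := by
    intro π ρ hπ hρ x hx
    simp only [Set.mem_setOf_eq] at *
    rw [Equiv.Perm.mul_apply, hρ x hx, hπ x hx]
  inv_mem' := by
    intro π hπ x hx
    simp only [Set.mem_setOf_eq] at *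
    apply π.injective
    rw [Equiv.Perm.inv_def, Equiv.apply_symm_apply, hπ x hx]

lemma fixGE_apply {d : ℕ} {π : Equiv.Perm ℕ} (h : π ∈ fixGE d) :
    ∀ x, d ≤ x → π x = x := h

lemma fixGE_lt {d : ℕ} {π : Equiv.Perm ℕ} (hπ : π ∈ fixGE d) {x : ℕ} (hx : x < d) :
    π x < d := by
  by_contra h
  push_neg at h
  have h1 : π (π x) = π x := fixGE_apply hπ _ h
  have h2 := π.injective h1
  omega

lemma block_div {d : ℕ} (hd : 0 < d) {y : ℕ} (hy : y < d) (b : ℕ) :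
    (b * d + y) / d = b := by
  rw [mul_comm, Nat.mul_add_div hd, Nat.div_eq_of_lt hy, add_zero]

lemma block_mod {d : ℕ} (hd : 0 < d) {y : ℕ} (hy : y < d) (b : ℕ) :
    (b * d + y) % d = y := by
  rw [mul_comm, Nat.mul_add_mod, Nat.mod_eq_of_lt hy]

/-- conjugating permutation Φ -/
def blockConj (d : ℕ) (hd : 0 < d) (f : Equiv.Perm ℕ) (hf : f ∈ fixGE d) : Equiv.Perm ℕ where
  toFun x := x / d * d + (f ^ (x / d)) (x % d)
  invFun x := x / d * d + ((f ^ (x / d))⁻¹) (x % d)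
  left_inv x := by
    have hy : x % d < d := Nat.mod_lt _ hd
    have h1 : (f ^ (x / d)) (x % d) < d := fixGE_lt (pow_mem hf _) hy
    dsimp only
    rw [block_div hd h1, block_mod hd h1, Equiv.Perm.inv_def, Equiv.symm_apply_apply]
    exact Nat.div_add_mod' x d
  right_inv x := by
    have hy : x % d < d := Nat.mod_lt _ hd
    have h1 : ((f ^ (x / d))⁻¹) (x % d) < d := fixGE_lt (inv_mem (pow_mem hf _)) hy
    dsimp only
    rw [block_div hd h1, block_mod hd h1, Equiv.Perm.inv_def, Equiv.apply_symm_apply]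
    exact Nat.div_add_mod' x d

lemma blockConj_apply (d : ℕ) (hd : 0 < d) (f : Equiv.Perm ℕ) (hf : f ∈ fixGE d)
    (b : ℕ) {y : ℕ} (hy : y < d) :
    blockConj d hd f hf (b * d + y) = b * d + (f ^ b) y := by
  show (b * d + y) / d * d + (f ^ ((b * d + y) / d)) ((b * d + y) % d) = _
  rw [block_div hd hy, block_mod hd hy]

lemma blockConj_inv_apply (d : ℕ) (hd : 0 < d) (f : Equiv.Perm ℕ) (hf : f ∈ fixGE d)
    (b : ℕ) {y : ℕ} (hy : y < d) :
    (blockConj d hd f hf)⁻¹ (b * d + y) = b * d + ((f ^ b)⁻¹) y := by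
  show (b * d + y) / d * d + ((f ^ ((b * d + y) / d))⁻¹) ((b * d + y) % d) = _
  rw [block_div hd hy, block_mod hd hy]

/-- the underlying function of the block permutation -/
def blockFun (n d : ℕ) (π : Equiv.Perm (Fin n)) (x : ℕ) : ℕ :=
  if h : x / d < n then ((π ⟨x / d, h⟩ : Fin n) : ℕ) * d + x % d else x

lemma blockFun_comp (n d : ℕ) (hd : 0 < d) (π ρ : Equiv.Perm (Fin n)) (x : ℕ) :
    blockFun n d π (blockFun n d ρ x) = blockFun n d (π * ρ) x := by
  unfold blockFun
  by_cases h : x / d < n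
  · rw [dif_pos h, dif_pos h]
    have hy : x % d < d := Nat.mod_lt _ hd
    simp only [block_div hd hy, block_mod hd hy]
    rw [dif_pos (Fin.isLt _)]
    simp [Fin.eta, Equiv.Perm.mul_apply]
  · rw [dif_neg h, dif_neg h, dif_neg h]

lemma blockFun_one (n d : ℕ) (x : ℕ) : blockFun n d 1 x = x := by
  unfold blockFun
  split
  · simp [Nat.div_add_mod']
  · rfl

def blockHom (n d : ℕ) (hd : 0 < d) : Equiv.Perm (Fin n) →* Equiv.Perm ℕ where
  toFun π :=
    { toFun := blockFun n d π
      invFun := blockFun n d π⁻¹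
      left_inv := fun x => by
        rw [blockFun_comp n d hd, inv_mul_cancel, blockFun_one]
      right_inv := fun x => by
        rw [blockFun_comp n d hd, mul_inv_cancel, blockFun_one] }
  map_one' := Equiv.ext fun x => blockFun_one n d x
  map_mul' := fun π ρ => Equiv.ext fun x => (blockFun_comp n d hd π ρ x).symm

lemma blockHom_apply (n d : ℕ) (hd : 0 < d) (π : Equiv.Perm (Fin n)) (x : ℕ) :
    blockHom n d hd π x = blockFun n d π x := rfl


lemma shift_apply (d : ℕ) (σ : Equiv.Perm ℕ) (x : ℕ) :
    shift d σ x = if x < d then x else σ (x - d) + d := rfl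

lemma theta_apply (d : ℕ) (x : ℕ) :
    theta d x = if x < d then x + d else if x < 2 * d then x - d else x := rfl

lemma shift_zero (e : Equiv.Perm ℕ) : shift 0 e = e := by
  apply Equiv.ext
  intro x
  rw [shift_apply]
  simp

lemma swap_comm' {α : Type*} [DecidableEq α] {a b c e : α}
    (h1 : c ≠ a) (h2 : c ≠ b) (h3 : e ≠ a) (h4 : e ≠ b) :
    Equiv.swap a b * Equiv.swap c e = Equiv.swap c e * Equiv.swap a b := by
  have h : Equiv.swap (Equiv.swap a b c) (Equiv.swap a b e)
      = Equiv.swap a b * Equiv.swap c e * (Equiv.swap a b)⁻¹ :=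
    Equiv.swap_apply_apply _ _ _
  rw [Equiv.swap_apply_of_ne_of_ne h1 h2, Equiv.swap_apply_of_ne_of_ne h3 h4,
    Equiv.swap_inv] at h
  conv_rhs => rw [h]
  simp [mul_assoc]

lemma swap_braid {α : Type*} [DecidableEq α] {a b c : α}
    (hab : a ≠ b) (hbc : b ≠ c) (hac : a ≠ c) :
    Equiv.swap a b * Equiv.swap b c * Equiv.swap a b
      = Equiv.swap b c * Equiv.swap a b * Equiv.swap b c := by
  have h1 : Equiv.swap a b * Equiv.swap b c * Equiv.swap a b
      = Equiv.swap (Equiv.swap a b b) (Equiv.swap a b c) := by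
    rw [Equiv.swap_apply_apply, Equiv.swap_inv]
  have h2 : Equiv.swap b c * Equiv.swap a b * Equiv.swap b c
      = Equiv.swap (Equiv.swap b c a) (Equiv.swap b c b) := by
    rw [Equiv.swap_apply_apply, Equiv.swap_inv]
  rw [h1, h2, Equiv.swap_apply_right, Equiv.swap_apply_left,
    Equiv.swap_apply_of_ne_of_ne hac.symm hbc.symm,
    Equiv.swap_apply_of_ne_of_ne hab hac]

lemma key (d n : ℕ) (hd : 0 < d) (f : Equiv.Perm ℕ) (hf : f ∈ fixGE d)
    (e : Equiv.Perm ℕ)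
    (he : ∀ x, e x = if x < d then f x + d else if x < 2 * d then f⁻¹ (x - d) else x)
    (s : ℕ) (h1 : 1 ≤ s) (h2 : s < n) :
    blockConj d hd f hf * blockHom n d hd
        (Equiv.swap (⟨s - 1, by omega⟩ : Fin n) ⟨s, h2⟩) * (blockConj d hd f hf)⁻¹
      = shift ((s - 1) * d) e := by
  obtain ⟨t, rfl⟩ : ∃ t, s = t + 1 := ⟨s - 1, by omega⟩
  simp only [Nat.add_sub_cancel]
  apply Equiv.ext
  intro x
  obtain ⟨b, y, hy, rfl⟩ : ∃ b y, y < d ∧ x = b * d + y :=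
    ⟨x / d, x % d, Nat.mod_lt _ hd, (Nat.div_add_mod' x d).symm⟩
  simp only [Equiv.Perm.mul_apply]
  rw [blockConj_inv_apply d hd f hf b hy]
  have hy' : ((f ^ b)⁻¹) y < d := fixGE_lt (inv_mem (pow_mem hf b)) hy
  rw [blockHom_apply]
  by_cases hb1 : b = t
  · subst hb1
    have hstep : blockFun n d (Equiv.swap (⟨b, by omega⟩ : Fin n) ⟨b + 1, h2⟩)
        (b * d + (f ^ b)⁻¹ y) = (b + 1) * d + (f ^ b)⁻¹ y := by
      unfold blockFun
      simp only [block_div hd hy', block_mod hd hy']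
      rw [dif_pos (show b < n by omega)]
      rw [Equiv.swap_apply_left]
    rw [hstep, blockConj_apply d hd f hf (b + 1) hy']
    have hfy : (f ^ (b + 1)) ((f ^ b)⁻¹ y) = f y := by
      rw [pow_succ']
      simp [Equiv.Perm.mul_apply]
    rw [hfy, shift_apply, if_neg (Nat.not_lt.2 (Nat.le_add_right _ _)),
      Nat.add_sub_cancel_left, he, if_pos hy]
    ring
  · by_cases hb2 : b = t + 1
    · subst hb2
      have hstep : blockFun n d (Equiv.swap (⟨t, by omega⟩ : Fin n) ⟨t + 1, h2⟩)
          ((t + 1) * d + (f ^ (t + 1))⁻¹ y) = t * d + (f ^ (t + 1))⁻¹ y := by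
        unfold blockFun
        simp only [block_div hd hy', block_mod hd hy']
        rw [dif_pos (show t + 1 < n by omega)]
        rw [Equiv.swap_apply_right]
      rw [hstep, blockConj_apply d hd f hf t hy']
      have hfy : (f ^ t) ((f ^ (t + 1))⁻¹ y) = f⁻¹ y := by
        rw [pow_succ', mul_inv_rev]
        simp [Equiv.Perm.mul_apply]
      have hns : ¬ ((t + 1) * d + y < t * d) := by
        rw [add_mul, one_mul, add_assoc]
        exact Nat.not_lt.2 (Nat.le_add_right _ _)
      have hsub : (t + 1) * d + y - t * d = d + y := by
        rw [add_mul, one_mul, add_assoc, Nat.add_sub_cancel_left]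
      rw [hfy, shift_apply, if_neg hns, hsub, he, if_neg (by omega), if_pos (by omega)]
      have : d + y - d = y := by omega
      rw [this]
      ring
    · -- b ∉ {t, t+1} : everything is fixed
      have hstep : blockFun n d (Equiv.swap (⟨t, by omega⟩ : Fin n) ⟨t + 1, h2⟩)
          (b * d + (f ^ b)⁻¹ y) = b * d + (f ^ b)⁻¹ y := by
        unfold blockFun
        simp only [block_div hd hy', block_mod hd hy']
        by_cases hbn : b < n
        · rw [dif_pos hbn]
          rw [Equiv.swap_apply_of_ne_of_ne (Fin.ne_of_val_ne (by simpa using hb1))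
            (Fin.ne_of_val_ne (by simpa using hb2))]
        · rw [dif_neg hbn]
      rw [hstep, blockConj_apply d hd f hf b hy', Equiv.Perm.inv_def, Equiv.apply_symm_apply]
      rcases Nat.lt_or_ge b t with hbt | hbt
      · -- b < t : below the support of shift
        have hlt : b * d + y < t * d :=
          lt_of_lt_of_le (by calc b * d + y < b * d + d := Nat.add_lt_add_left hy _
                               _ = (b + 1) * d := by ring)
            (Nat.mul_le_mul_right d (by omega))
        rw [shift_apply, if_pos hlt]
      · -- b ≥ t + 2 : above the support of shift
        have hge : b ≥ t + 2 := by omega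
        have hle : t * d ≤ b * d := Nat.mul_le_mul_right d (by omega)
        have hns : ¬ (b * d + y < t * d) := Nat.not_lt.2 (le_trans hle (Nat.le_add_right _ _))
        have hsub : b * d + y - t * d = (b - t) * d + y := by
          rw [Nat.sub_add_comm hle, Nat.sub_mul]
        have hbig : 2 * d ≤ (b - t) * d := Nat.mul_le_mul_right d (by omega)
        rw [shift_apply, if_neg hns, hsub, he, if_neg (by omega), if_neg (by omega)]
        have : (b - t) * d + y + t * d = b * d + y := by
          rw [add_right_comm, ← add_mul]
          congr 2
          omega
        rw [this]

end Stmt17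

/-- If `σ = θ·ς₁·ω^d(ς₂)` with `ς₁ς₂ = ς₂ς₁ = τ` of order `q`, and
`a = τ^k·ω^d(τ^ℓ)` with `k + ℓ ≡ -1 (mod q)`, then `σa` is an involution, and the
translates `η_s = ω^{(s-1)d}(σa)` are involutions satisfying the Coxeter/braid
relations, so `(s, s+1) ↦ η_s` extends to a homomorphism `Sₙ → S_{nd}`. -/
theorem stmt_17 (d n : ℕ) (hd : 2 ≤ d) (hn : 3 ≤ n) (ς₁ ς₂ τ : Equiv.Perm ℕ)
    (h₁ : ∀ k, d ≤ k → ς₁ k = k) (h₂ : ∀ k, d ≤ k → ς₂ k = k)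
    (hτ : ς₁ * ς₂ = τ) (hτ' : ς₂ * ς₁ = τ)
    (σ : Equiv.Perm ℕ) (hσ : σ = theta d * ς₁ * shift d ς₂)
    (q : ℕ) (hq : q = orderOf τ)
    (k ℓ : ℤ) (hkl : (q : ℤ) ∣ k + ℓ + 1)
    (a : Equiv.Perm ℕ) (ha : a = τ ^ k * shift d (τ ^ ℓ))
    (η : ℕ → Equiv.Perm ℕ) (hη : ∀ s, η s = shift ((s - 1) * d) (σ * a)) :
    (σ * a) * (σ * a) = 1 ∧
      (∀ s, 1 ≤ s → s ≤ n - 1 → η s * η s = 1) ∧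
      (∀ r s, 1 ≤ r → 1 ≤ s → s ≤ n - 1 → r + 2 ≤ s → η r * η s = η s * η r) ∧
      (∀ r, 1 ≤ r → r + 1 ≤ n - 1 →
        η r * η (r + 1) * η r = η (r + 1) * η r * η (r + 1)) ∧
      ∃ ψ : Equiv.Perm (Fin n) →* Equiv.Perm ℕ,
        ∀ (s : ℕ) (h1 : 1 ≤ s) (h2 : s ≤ n - 1),
          ψ (Equiv.swap (⟨s - 1, by omega⟩ : Fin n) (⟨s, by omega⟩ : Fin n)) = η s := by
  classical
  open Stmt17 in
  subst hσ ha
  have hd0 : 0 < d := by omega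
  have hς₁ : ς₁ ∈ fixGE d := h₁
  have hς₂ : ς₂ ∈ fixGE d := h₂
  have hτm : τ ∈ fixGE d := hτ ▸ mul_mem hς₁ hς₂
  set f : Equiv.Perm ℕ := ς₁ * τ ^ k with hfdef
  have hfm : f ∈ fixGE d := mul_mem hς₁ (zpow_mem hτm k)
  -- commutation
  have hcτ₂ : τ * ς₂ = ς₂ * τ := by
    conv_lhs => rw [← hτ']
    conv_rhs => rw [← hτ]
    rw [mul_assoc]
  have hck : τ ^ k * ς₂ = ς₂ * τ ^ k :=
    ((show Commute τ ς₂ from hcτ₂).zpow_left k).eq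
  -- τ ^ (k + ℓ + 1) = 1
  have hone : τ ^ (k + ℓ + 1) = 1 := orderOf_dvd_iff_zpow_eq_one.mp (by rwa [hq] at hkl)
  have hfg : f * (ς₂ * τ ^ ℓ) = 1 := by
    have step : f * (ς₂ * τ ^ ℓ) = τ ^ (k + ℓ + 1) := by
      rw [hfdef, mul_assoc, ← mul_assoc (τ ^ k), hck, mul_assoc, ← mul_assoc, hτ]
      group
    rw [step, hone]
  have hg : f⁻¹ = ς₂ * τ ^ ℓ := inv_eq_of_mul_eq_one_right hfg
  -- the formula for σ * a
  set e : Equiv.Perm ℕ := theta d * ς₁ * shift d ς₂ * (τ ^ k * shift d (τ ^ ℓ)) with hedef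
  have he : ∀ x, e x = if x < d then f x + d else if x < 2 * d then f⁻¹ (x - d) else x := by
    intro x
    show theta d (ς₁ (shift d ς₂ ((τ ^ k) (shift d (τ ^ ℓ) x)))) = _
    rcases lt_or_ge x d with h | h
    · have e1 : shift d (τ ^ ℓ) x = x := by rw [shift_apply, if_pos h]
      have hx1 : (τ ^ k) x < d := fixGE_lt (zpow_mem hτm k) h
      have e2 : shift d ς₂ ((τ ^ k) x) = (τ ^ k) x := by rw [shift_apply, if_pos hx1]
      have hx2 : ς₁ ((τ ^ k) x) < d := fixGE_lt hς₁ hx1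
      rw [e1, e2, theta_apply, if_pos hx2, if_pos h]
      rfl
    · rcases lt_or_ge x (2 * d) with h2x | h2x
      · have e1 : shift d (τ ^ ℓ) x = (τ ^ ℓ) (x - d) + d := by
          rw [shift_apply, if_neg (by omega)]
        have hx1 : (τ ^ ℓ) (x - d) < d := fixGE_lt (zpow_mem hτm ℓ) (by omega)
        have e2 : (τ ^ k) ((τ ^ ℓ) (x - d) + d) = (τ ^ ℓ) (x - d) + d :=
          fixGE_apply (zpow_mem hτm k) _ (by omega)
        have e3 : shift d ς₂ ((τ ^ ℓ) (x - d) + d) = ς₂ ((τ ^ ℓ) (x - d)) + d := by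
          rw [shift_apply, if_neg (by omega), Nat.add_sub_cancel]
        have hx2 : ς₂ ((τ ^ ℓ) (x - d)) < d := fixGE_lt hς₂ hx1
        have e4 : ς₁ (ς₂ ((τ ^ ℓ) (x - d)) + d) = ς₂ ((τ ^ ℓ) (x - d)) + d :=
          fixGE_apply hς₁ _ (by omega)
        rw [e1, e2, e3, e4, theta_apply, if_neg (by omega), if_pos (by omega),
          if_neg (by omega), if_pos h2x, Nat.add_sub_cancel, hg]
        rfl
      · have e1 : shift d (τ ^ ℓ) x = x := by
          rw [shift_apply, if_neg (by omega), fixGE_apply (zpow_mem hτm ℓ) _ (by omega)]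
          omega
        have e2 : (τ ^ k) x = x := fixGE_apply (zpow_mem hτm k) _ (by omega)
        have e3 : shift d ς₂ x = x := by
          rw [shift_apply, if_neg (by omega), h₂ (x - d) (by omega)]
          omega
        have e4 : ς₁ x = x := h₁ x (by omega)
        rw [e1, e2, e3, e4, theta_apply, if_neg (by omega), if_neg (by omega),
          if_neg (by omega), if_neg (by omega)]
  -- the homomorphism
  set Φ : Equiv.Perm ℕ := blockConj d hd0 f hfm with hΦ
  set ψ : Equiv.Perm (Fin n) →* Equiv.Perm ℕ :=
    ((MulAut.conj Φ).toMonoidHom).comp (blockHom n d hd0) with hψ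
  have hψs : ∀ (s : ℕ) (_ : 1 ≤ s) (hsn : s < n),
      η s = ψ (Equiv.swap (⟨s - 1, by omega⟩ : Fin n) ⟨s, hsn⟩) := by
    intro s hs1 hs2
    rw [hη s, hψ]
    simp only [MonoidHom.comp_apply, MulEquiv.coe_toMonoidHom, MulAut.conj_apply]
    exact (key d n hd0 f hfm e he s hs1 hs2).symm
  have part2 : ∀ s, 1 ≤ s → s ≤ n - 1 → η s * η s = 1 := by
    intro s hs1 hs2
    rw [hψs s hs1 (by omega), ← map_mul, Equiv.swap_mul_self, map_one]
  refine ⟨?_, part2, ?_, ?_, ⟨ψ, fun s hs1 hs2 => (hψs s hs1 (by omega)).symm⟩⟩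
  · have h1 : η 1 = e := by
      rw [hη 1]
      have : (1 - 1) * d = 0 := by norm_num
      rw [this, shift_zero]
    have := part2 1 le_rfl (by omega)
    rwa [h1] at this
  · intro r s hr1 hs1 hs2 hrs
    rw [hψs r hr1 (by omega), hψs s hs1 (by omega), ← map_mul, ← map_mul]
    congr 1
    exact swap_comm' ((by simp only [ne_eq, Fin.mk.injEq]; omega)) ((by simp only [ne_eq, Fin.mk.injEq]; omega))
      ((by simp only [ne_eq, Fin.mk.injEq]; omega)) ((by simp only [ne_eq, Fin.mk.injEq]; omega))
  · intro r hr1 hr2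
    rw [hψs r hr1 (by omega), hψs (r + 1) (by omega) (by omega),
      ← map_mul, ← map_mul, ← map_mul, ← map_mul]
    congr 1
    have hmk : (⟨r + 1 - 1, by omega⟩ : Fin n) = ⟨r, by omega⟩ := rfl
    rw [hmk]
    exact swap_braid ((by simp only [ne_eq, Fin.mk.injEq]; omega)) ((by simp only [ne_eq, Fin.mk.injEq]; omega))
      ((by simp only [ne_eq, Fin.mk.injEq]; omega))
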